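/- arXiv:2405.06244 — 2 statements merged into one kernel-verified Lean document; each statement's English description precedes it below -/
import Mathlib

section
/- Let G=(V,E) be a complete graph, d_1,...,d_k distinct vertices (with d_{k+1}:=d_1), and for each i let (x^i, y^i) be a point in the fractional d_i-d_{i+1} stroll polytope P_stroll (i.e., x^i(δ(v)) = 2 y^i_v for all v; x^i(δ(S)) ≥ 1 for all S ⊆ V\{d_{i+1}} with d_i ∈ S; x^i(δ(S)) ≥ 2 y^i_v for all S ⊆ V\{d_i, d_{i+1}} and v ∈ S; y^i_{d_i} = y^i_{d_{i+1}} = 1/2). Suppose additionally that Σ_{i=1}^k y^i_v = 1 for every v ∈ V. Then x := Σ_{i=1}^k x^i lies in the Held-Karp polytope P_HK(G), i.e., x(δ(v)) = 2 for all v ∈ V and x(δ(S)) ≥ 2 for all nonempty proper subsets S ⊊ V. -/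
open scoped Classical BigOperators

/-- `cutFun x S` is `x(δ(S))`: the total `x`-value of edges with exactly one endpoint in `S`,
where `x : V → V → ℝ` is a symmetric edge-weight function. -/
noncomputable def cutFun {V : Type*} [Fintype V] [DecidableEq V]
    (x : V → V → ℝ) (S : Finset V) : ℝ :=
  ∑ u ∈ S, ∑ v ∈ Sᶜ, x u v

/-- `(x, y)` lies in the fractional `s`-`t` stroll polytope `P_stroll`. -/
def IsStroll {V : Type*} [Fintype V] [DecidableEq V]
    (x : V → V → ℝ) (y : V → ℝ) (s t : V) : Prop :=
  (∀ u v, 0 ≤ x u v) ∧ (∀ u v, x u v = x v u) ∧ (∀ v, x v v = 0) ∧ (∀ v, 0 ≤ y v) ∧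
  (∀ v, cutFun x {v} = 2 * y v) ∧
  (∀ S : Finset V, s ∈ S → t ∉ S → 1 ≤ cutFun x S) ∧
  (∀ S : Finset V, s ∉ S → t ∉ S → ∀ v ∈ S, 2 * y v ≤ cutFun x S) ∧
  y s = 1 / 2 ∧ y t = 1 / 2

lemma cutFun_sum {V : Type*} [Fintype V] [DecidableEq V] {k : ℕ}
    (x : Fin k → V → V → ℝ) (S : Finset V) :
    cutFun (fun u w => ∑ i : Fin k, x i u w) S = ∑ i : Fin k, cutFun (x i) S := by
  unfold cutFun
  rw [Finset.sum_comm (s := Finset.univ)]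
  exact Finset.sum_congr rfl fun u _ => Finset.sum_comm

lemma cutFun_compl {V : Type*} [Fintype V] [DecidableEq V]
    (x : V → V → ℝ) (hsym : ∀ u v, x u v = x v u) (S : Finset V) :
    cutFun x Sᶜ = cutFun x S := by
  unfold cutFun
  rw [compl_compl, Finset.sum_comm]
  exact Finset.sum_congr rfl fun u _ => Finset.sum_congr rfl fun v _ => hsym v u

lemma cutFun_nonneg {V : Type*} [Fintype V] [DecidableEq V]
    (x : V → V → ℝ) (hx : ∀ u v, 0 ≤ x u v) (S : Finset V) : 0 ≤ cutFun x S :=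
  Finset.sum_nonneg fun u _ => Finset.sum_nonneg fun v _ => hx u v

open Fin.NatCast in
lemma cycle_closed {k : ℕ} [NeZero k] (I : Finset (Fin k)) (h1 : I.Nonempty)
    (h2 : I ≠ Finset.univ) : ∃ i, i ∈ I ∧ i + 1 ∉ I := by
  by_contra h
  push_neg at h
  apply h2
  obtain ⟨j, hj⟩ := h1
  have key : ∀ n : ℕ, j + (n : Fin k) ∈ I := by
    intro n
    induction n with
    | zero => simpa using hj
    | succ n ih =>
        have hcast : ((n + 1 : ℕ) : Fin k) = (n : Fin k) + 1 := by push_cast; ring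
        rw [hcast, ← add_assoc]
        exact h _ ih
  ext m
  simp only [Finset.mem_univ, iff_true]
  have hkey := key ((m - j : Fin k).val)
  rw [Fin.cast_val_eq_self] at hkey
  have hm : j + (m - j) = m := add_sub_cancel j m
  rwa [hm] at hkey

/-- If `(x^i, y^i)` is a fractional `d_i`-`d_{i+1}` stroll for each `i` and the strolls jointly
cover every vertex exactly once, then `x = Σ_i x^i` lies in the Held–Karp polytope. -/
theorem sum_strolls_mem_heldKarp {V : Type*} [Fintype V] [DecidableEq V] {k : ℕ} [NeZero k]
    (d : Fin k → V) (hd : Function.Injective d)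
    (x : Fin k → V → V → ℝ) (y : Fin k → V → ℝ)
    (hstroll : ∀ i : Fin k, IsStroll (x i) (y i) (d i) (d (i + 1)))
    (hcov : ∀ v : V, ∑ i : Fin k, y i v = 1) :
    (∀ v : V, cutFun (fun u w => ∑ i : Fin k, x i u w) {v} = 2) ∧
    (∀ S : Finset V, S.Nonempty → S ≠ Finset.univ →
      2 ≤ cutFun (fun u w => ∑ i : Fin k, x i u w) S) := by
  constructor
  · intro v
    rw [cutFun_sum]
    have : ∀ i : Fin k, cutFun (x i) {v} = 2 * y i v := fun i => (hstroll i).2.2.2.2.1 v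
    simp only [this, ← Finset.mul_sum, hcov v, mul_one]
  · intro S hSne hSuniv
    rw [cutFun_sum]
    set I : Finset (Fin k) := Finset.univ.filter (fun i => d i ∈ S) with hI
    by_cases hIe : I = ∅
    · -- no d i in S
      obtain ⟨v, hv⟩ := hSne
      have hd' : ∀ i : Fin k, d i ∉ S := by
        intro i hi
        exact (Finset.eq_empty_iff_forall_notMem.mp hIe i) (by simp [hI, hi])
      have hle : ∀ i : Fin k, 2 * y i v ≤ cutFun (x i) S := fun i =>
        (hstroll i).2.2.2.2.2.2.1 S (hd' i) (hd' (i + 1)) v hv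
      calc (2 : ℝ) = ∑ i : Fin k, 2 * y i v := by
            rw [← Finset.mul_sum, hcov v, mul_one]
        _ ≤ ∑ i : Fin k, cutFun (x i) S := Finset.sum_le_sum fun i _ => hle i
    · by_cases hIu : I = Finset.univ
      · -- all d i in S; work on the complement
        have hScne : Sᶜ.Nonempty := by
          rw [← Finset.card_pos, Finset.card_compl]
          have := (Finset.card_lt_iff_ne_univ S).mpr hSuniv
          omega
        obtain ⟨v, hv⟩ := hScne
        have hd' : ∀ i : Fin k, d i ∉ Sᶜ := by
          intro i
          have : i ∈ I := hIu ▸ Finset.mem_univ i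
          simp only [hI, Finset.mem_filter] at this
          simp [this.2]
        have hle : ∀ i : Fin k, 2 * y i v ≤ cutFun (x i) S := by
          intro i
          rw [← cutFun_compl (x i) (hstroll i).2.1 S]
          exact (hstroll i).2.2.2.2.2.2.1 Sᶜ (hd' i) (hd' (i + 1)) v hv
        calc (2 : ℝ) = ∑ i : Fin k, 2 * y i v := by
              rw [← Finset.mul_sum, hcov v, mul_one]
          _ ≤ ∑ i : Fin k, cutFun (x i) S := Finset.sum_le_sum fun i _ => hle i
      · -- crossing case
        obtain ⟨i, hiI, hi1I⟩ :=
          cycle_closed I (Finset.nonempty_of_ne_empty hIe) hIu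
        obtain ⟨i', hi'I, hi'1I⟩ :=
          cycle_closed Iᶜ (Finset.nonempty_of_ne_empty (by
            simpa [Finset.compl_eq_empty_iff] using hIu))
            (by simpa [Finset.compl_eq_univ_iff] using hIe)
        have hmemI : ∀ j : Fin k, j ∈ I ↔ d j ∈ S := by
          intro j; simp [hI]
        have hii' : i ≠ i' := by
          intro h; rw [h] at hiI; exact (Finset.mem_compl.mp hi'I) hiI
        have h1 : 1 ≤ cutFun (x i) S :=
          (hstroll i).2.2.2.2.2.1 S ((hmemI i).mp hiI)
            (fun h => hi1I ((hmemI (i + 1)).mpr h))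
        have h2 : 1 ≤ cutFun (x i') S := by
          rw [← cutFun_compl (x i') (hstroll i').2.1 S]
          refine (hstroll i').2.2.2.2.2.1 Sᶜ ?_ ?_
          · exact Finset.mem_compl.mpr fun h => (Finset.mem_compl.mp hi'I) ((hmemI i').mpr h)
          · rw [Finset.notMem_compl] at hi'1I ⊢
            exact (hmemI (i' + 1)).mp (by simpa using hi'1I)
        have hpair := Finset.sum_le_sum_of_subset_of_nonneg
          (f := fun j => cutFun (x j) S)
          (Finset.subset_univ ({i, i'} : Finset (Fin k)))
          (fun j _ _ => cutFun_nonneg (x j) (hstroll j).1 S)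
        rw [Finset.sum_pair hii'] at hpair
        linarith
end

section
/- Let G = (V,E) be a complete graph with metric edge costs c (c symmetric, nonnegative, satisfying the triangle inequality), let d_1,...,d_k ∈ V be distinct, and let M = (V, E_M) be a connected Eulerian multigraph (all vertex degrees even) whose edges come from E (with multiplicities), together with a closed walk in M that visits d_1,...,d_k in this order. Then there exists a Hamiltonian cycle C of G that visits d_1,...,d_k in this order and has cost c(C) ≤ c(E_M). -/
open scoped Classical BigOperators
open scoped List
open Fin.NatCast

section AuxShortcut
variable {V : Type*} [Fintype V] [DecidableEq V]

lemma sum_ite_edge (v x y : V) (hxy : x ≠ y) :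
    ∑ w : V, (if s(x,y) = s(v,w) then 1 else 0) =
      (if v = x then 1 else 0) + (if v = y then 1 else 0) := by
  by_cases hvx : v = x
  · subst hvx
    rw [if_pos rfl, if_neg hxy]
    rw [Finset.sum_eq_single y]
    · simp
    · intro w _ hw
      rw [if_neg]
      intro hc
      rw [Sym2.eq_iff] at hc
      rcases hc with ⟨h1, h2⟩ | ⟨h1, h2⟩ <;> simp_all
    · simp
  · by_cases hvy : v = y
    · subst hvy
      rw [if_neg hvx, if_pos rfl]
      rw [Finset.sum_eq_single x]
      · simp [Sym2.eq_iff]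
      · intro w _ hw
        rw [if_neg]
        intro hc
        rw [Sym2.eq_iff] at hc
        rcases hc with ⟨h1, h2⟩ | ⟨h1, h2⟩ <;> simp_all
      · simp
    · rw [if_neg hvx, if_neg hvy]
      apply Finset.sum_eq_zero
      intro w _
      rw [if_neg]
      intro hc
      rw [Sym2.eq_iff] at hc
      rcases hc with ⟨h1, h2⟩ | ⟨h1, h2⟩ <;> simp_all

lemma walk_deg_parity {a b : V} (p : (⊤ : SimpleGraph V).Walk a b) (v : V) :
    (∑ w : V, p.edges.count s(v,w)) % 2 =
      ((if v = a then 1 else 0) + (if v = b then 1 else 0)) % 2 := by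
  induction p with
  | nil =>
    simp only [SimpleGraph.Walk.edges_nil, List.count_nil, Finset.sum_const_zero]
    split_ifs <;> simp
  | @cons a b' c h p ih =>
    have hab' : a ≠ b' := h.ne
    simp only [SimpleGraph.Walk.edges_cons, List.count_cons, beq_iff_eq]
    rw [Finset.sum_add_distrib, sum_ite_edge v a b' hab']
    generalize hD : (∑ x : V, List.count s(v, x) p.edges) = D at *
    by_cases h1 : v = a <;> by_cases h2 : v = b' <;> by_cases h3 : v = c <;>
      simp_all [Nat.add_mod] <;> omega

lemma parity_shift {A B : ℕ} {v x y u : V} (hxy : x ≠ y) (hxu : x ≠ u) (hyu : y ≠ u)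
    (h1 : A % 2 = if v = x ∨ v = u then 1 else 0)
    (h2 : A = B + ((if v = x then 1 else 0) + (if v = y then 1 else 0))) :
    B % 2 = if v = y ∨ v = u then 1 else 0 := by
  split_ifs at h1 h2 ⊢ <;> first | omega | (subst_vars; simp_all)

lemma parity_shift0 {A B : ℕ} {v u y : V} (huy : u ≠ y)
    (h1 : A % 2 = 0) (h2 : A = B + ((if v = u then 1 else 0) + (if v = y then 1 else 0))) :
    B % 2 = if v = y ∨ v = u then 1 else 0 := by
  split_ifs at h1 h2 ⊢ <;> first | omega | (subst_vars; simp_all)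

lemma extract_path : ∀ (N : ℕ) (m : Sym2 V → ℕ), (∑ e : Sym2 V, m e) ≤ N →
    (∀ v, m s(v,v) = 0) →
    ∀ x u : V, x ≠ u → (∀ v, (∑ w : V, m s(v,w)) % 2 = if v = x ∨ v = u then 1 else 0) →
    ∃ p : (⊤ : SimpleGraph V).Walk x u, ∀ e, p.edges.count e ≤ m e := by
  intro N
  induction N with
  | zero =>
    intro m hsum _ x u hxu hpar
    exfalso
    have hz : ∀ e, m e = 0 := by
      intro e
      have := Finset.single_le_sum (f := m) (fun e _ => Nat.zero_le _) (Finset.mem_univ e)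
      omega
    have := hpar x
    simp [hz] at this
  | succ N ih =>
    intro m hsum hloop x u hxu hpar
    have hx : (∑ w : V, m s(x,w)) % 2 = 1 := by rw [hpar]; simp
    have hex : ∃ w, m s(x,w) ≠ 0 := by
      by_contra h
      push_neg at h
      simp only [h] at hx
      simp at hx
    obtain ⟨y, hy⟩ := hex
    have hxy : x ≠ y := by rintro rfl; exact hy (hloop x)
    have hpoint : ∀ e, m e = (m e - (if s(x,y) = e then 1 else 0)) +
        (if s(x,y) = e then 1 else 0) := by
      intro e
      by_cases h : s(x,y) = e
      · rw [← h]; simp; omega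
      · simp [h]
    set m₁ : Sym2 V → ℕ := fun e => m e - (if s(x,y) = e then 1 else 0) with hm₁
    have hdeg : ∀ v, (∑ w : V, m s(v,w)) =
        (∑ w : V, m₁ s(v,w)) + ((if v = x then 1 else 0) + (if v = y then 1 else 0)) := by
      intro v
      rw [Finset.sum_congr rfl (fun w _ => hpoint s(v,w)), Finset.sum_add_distrib,
        sum_ite_edge v x y hxy]
    have hsum₁ : (∑ e : Sym2 V, m₁ e) ≤ N := by
      have h2 : (∑ e : Sym2 V, m e) = (∑ e : Sym2 V, m₁ e) + 1 := by
        rw [Finset.sum_congr rfl (fun e _ => hpoint e), Finset.sum_add_distrib]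
        congr 1
        rw [Finset.sum_ite_eq]
        simp
      omega
    have hloop₁ : ∀ v, m₁ s(v,v) = 0 := by
      intro v
      have := hloop v
      simp only [hm₁]
      omega
    by_cases hyu : y = u
    · refine ⟨SimpleGraph.Walk.cons (by simp [show x ≠ u from hxu]) SimpleGraph.Walk.nil, ?_⟩
      intro e
      simp only [SimpleGraph.Walk.edges_cons, SimpleGraph.Walk.edges_nil,
        List.count_cons, List.count_nil, beq_iff_eq]
      subst hyu
      by_cases h : s(x,y) = e
      · subst h
        have := hy
        simp
        omega
      · simp [h]
    · have hpar₁ : ∀ v, (∑ w : V, m₁ s(v,w)) % 2 = if v = y ∨ v = u then 1 else 0 :=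
        fun v => parity_shift hxy hxu hyu (hpar v) (hdeg v)
      obtain ⟨p, hp⟩ := ih m₁ hsum₁ hloop₁ y u hyu hpar₁
      refine ⟨SimpleGraph.Walk.cons (by simpa using hxy) p, ?_⟩
      intro e
      rw [SimpleGraph.Walk.edges_cons, List.count_cons]
      simp only [beq_iff_eq]
      have h1 := hp e
      have h2 := hpoint e
      have h3 : m₁ e = m e - (if s(x,y) = e then 1 else 0) := rfl
      rw [h3] at h1
      generalize (if s(x,y) = e then 1 else 0) = t at h1 h2 ⊢
      omega

lemma extract_closed (m : Sym2 V → ℕ) (hloop : ∀ v, m s(v,v) = 0)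
    (heven : ∀ v, (∑ w : V, m s(v,w)) % 2 = 0) (u : V) (hu : (∑ w : V, m s(u,w)) ≠ 0) :
    ∃ p : (⊤ : SimpleGraph V).Walk u u, p.edges ≠ [] ∧ ∀ e, p.edges.count e ≤ m e := by
  have hex : ∃ w, m s(u,w) ≠ 0 := by
    by_contra h
    push_neg at h
    exact hu (by simp [h])
  obtain ⟨y, hy⟩ := hex
  have huy : u ≠ y := by rintro rfl; exact hy (hloop u)
  have hpoint : ∀ e, m e = (m e - (if s(u,y) = e then 1 else 0)) +
      (if s(u,y) = e then 1 else 0) := by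
    intro e
    by_cases h : s(u,y) = e
    · rw [← h]; simp; omega
    · simp [h]
  set m₁ : Sym2 V → ℕ := fun e => m e - (if s(u,y) = e then 1 else 0) with hm₁
  have hdeg : ∀ v, (∑ w : V, m s(v,w)) =
      (∑ w : V, m₁ s(v,w)) + ((if v = u then 1 else 0) + (if v = y then 1 else 0)) := by
    intro v
    rw [Finset.sum_congr rfl (fun w _ => hpoint s(v,w)), Finset.sum_add_distrib,
      sum_ite_edge v u y huy]
  have hloop₁ : ∀ v, m₁ s(v,v) = 0 := by
    intro v
    have := hloop v
    simp only [hm₁]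
    omega
  have hpar₁ : ∀ v, (∑ w : V, m₁ s(v,w)) % 2 = if v = y ∨ v = u then 1 else 0 :=
    fun v => parity_shift0 huy (heven v) (hdeg v)
  obtain ⟨p, hp⟩ := extract_path (∑ e : Sym2 V, m₁ e) m₁ le_rfl hloop₁ y u
    (fun h => huy h.symm) hpar₁
  refine ⟨SimpleGraph.Walk.cons (by simpa using huy) p, by simp, ?_⟩
  intro e
  rw [SimpleGraph.Walk.edges_cons, List.count_cons]
  simp only [beq_iff_eq]
  have h1 := hp e
  have h2 := hpoint e
  have h3 : m₁ e = m e - (if s(u,y) = e then 1 else 0) := rfl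
  rw [h3] at h1
  generalize (if s(u,y) = e then 1 else 0) = t at h1 h2 ⊢
  omega

lemma reach_transfer (m m₂ : Sym2 V → ℕ) (T : List V)
    (hT : ∀ x y : V, m s(x,y) ≠ 0 → m₂ s(x,y) = 0 → x ∈ T) :
    ∀ {v s : V}, s ∈ T →
      (SimpleGraph.fromEdgeSet {e : Sym2 V | m e ≠ 0}).Reachable v s →
      ∃ s' ∈ T, (SimpleGraph.fromEdgeSet {e : Sym2 V | m₂ e ≠ 0}).Reachable v s' := by
  intro v s hs hr
  obtain ⟨w⟩ := hr
  induction w with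
  | nil => exact ⟨_, hs, SimpleGraph.Reachable.refl _⟩
  | @cons a b c h p ih =>
    rw [SimpleGraph.fromEdgeSet_adj] at h
    by_cases h2 : m₂ s(a,b) = 0
    · exact ⟨a, hT a b h.1 h2, SimpleGraph.Reachable.refl _⟩
    · obtain ⟨s', hs', hr'⟩ := ih hs
      refine ⟨s', hs', SimpleGraph.Reachable.trans ?_ hr'⟩
      exact SimpleGraph.Adj.reachable ((SimpleGraph.fromEdgeSet_adj _).mpr ⟨h2, h.2⟩)

lemma isolated_reachable (m : Sym2 V → ℕ) {v s : V}
    (hiso : (∑ w : V, m s(s,w)) = 0)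
    (hr : (SimpleGraph.fromEdgeSet {e : Sym2 V | m e ≠ 0}).Reachable v s) : v = s := by
  obtain ⟨w⟩ := hr.symm
  cases w with
  | nil => rfl
  | @cons _ b _ h _ =>
    exfalso
    rw [SimpleGraph.fromEdgeSet_adj] at h
    have h1 : m s(s,b) ≠ 0 := h.1
    have h2 : m s(s,b) ≤ ∑ w : V, m s(s,w) :=
      Finset.single_le_sum (f := fun w => m s(s,w)) (fun w _ => Nat.zero_le _)
        (Finset.mem_univ b)
    omega

lemma absorb : ∀ (N : ℕ) (m : Sym2 V → ℕ), (∑ e : Sym2 V, m e) ≤ N →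
    (∀ v, m s(v,v) = 0) → (∀ v, (∑ w : V, m s(v,w)) % 2 = 0) →
    ∀ (a : V) (p : (⊤ : SimpleGraph V).Walk a a),
    ∃ q : (⊤ : SimpleGraph V).Walk a a,
      p.support <+ q.support ∧
      (∀ v s : V, s ∈ p.support →
        (SimpleGraph.fromEdgeSet {e : Sym2 V | m e ≠ 0}).Reachable v s → v ∈ q.support) ∧
      (∀ e, q.edges.count e ≤ p.edges.count e + m e) := by
  intro N
  induction N with
  | zero =>
    intro m hsum hloop heven a p
    have hz : ∀ e, m e = 0 := by
      intro e
      have := Finset.single_le_sum (f := m) (fun e _ => Nat.zero_le _) (Finset.mem_univ e)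
      omega
    refine ⟨p, List.Sublist.refl _, ?_, fun e => Nat.le_add_right _ _⟩
    intro v s hs hr
    rwa [isolated_reachable m (by simp [hz]) hr]
  | succ N ih =>
    intro m hsum hloop heven a p
    by_cases hdeg0 : ∀ v ∈ p.support, (∑ w : V, m s(v,w)) = 0
    · refine ⟨p, List.Sublist.refl _, ?_, fun e => Nat.le_add_right _ _⟩
      intro v s hs hr
      rwa [isolated_reachable m (hdeg0 s hs) hr]
    · push_neg at hdeg0
      obtain ⟨u, hu, hud⟩ := hdeg0
      obtain ⟨C, hCne, hCcnt⟩ := extract_closed m hloop heven u hud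
      set m₂ : Sym2 V → ℕ := fun e => m e - C.edges.count e with hm₂
      have hpoint : ∀ e, m e = m₂ e + C.edges.count e := by
        intro e
        have := hCcnt e
        simp only [hm₂]
        omega
      have hsum₂ : (∑ e : Sym2 V, m₂ e) ≤ N := by
        have htot : (∑ e : Sym2 V, m e) =
            (∑ e : Sym2 V, m₂ e) + ∑ e : Sym2 V, C.edges.count e := by
          rw [Finset.sum_congr rfl (fun e _ => hpoint e), Finset.sum_add_distrib]
        have hc1 : 1 ≤ ∑ e : Sym2 V, C.edges.count e := by
          obtain ⟨e₀, t, he⟩ : ∃ e₀ t, C.edges = e₀ :: t := by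
            cases hE : C.edges with
            | nil => exact absurd hE hCne
            | cons e₀ t => exact ⟨_, _, rfl⟩
          have h1 : 1 ≤ C.edges.count e₀ := by simp [he]
          have h2 : C.edges.count e₀ ≤ ∑ e : Sym2 V, C.edges.count e :=
            Finset.single_le_sum (f := fun e => C.edges.count e)
              (fun e _ => Nat.zero_le _) (Finset.mem_univ e₀)
          omega
        omega
      have hloop₂ : ∀ v, m₂ s(v,v) = 0 := by
        intro v
        have := hloop v
        simp only [hm₂]
        omega
      have heven₂ : ∀ v, (∑ w : V, m₂ s(v,w)) % 2 = 0 := by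
        intro v
        have hdg : (∑ w : V, m s(v,w)) =
            (∑ w : V, m₂ s(v,w)) + ∑ w : V, C.edges.count s(v,w) := by
          rw [Finset.sum_congr rfl (fun w _ => hpoint s(v,w)), Finset.sum_add_distrib]
        have hpar := walk_deg_parity C v
        have h1 := heven v
        have h2 : ((if v = u then 1 else 0) + (if v = u then (1:ℕ) else 0)) % 2 = 0 := by
          split_ifs <;> rfl
        omega
      set pt := p.takeUntil u hu with hpt
      set pd := p.dropUntil u hu with hpd
      have hspec : pt.append pd = p := SimpleGraph.Walk.take_spec p hu
      set p' : (⊤ : SimpleGraph V).Walk a a := pt.append (C.append pd) with hp'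
      have hps : p.support = pt.support ++ pd.support.tail := by
        rw [← hspec, SimpleGraph.Walk.support_append]
      have hp's : p'.support = pt.support ++ (C.support.tail ++ pd.support.tail) := by
        rw [hp', SimpleGraph.Walk.support_append, SimpleGraph.Walk.tail_support_append]
      have hsub : p.support <+ p'.support := by
        rw [hps, hp's]
        exact (List.Sublist.refl _).append (List.sublist_append_right _ _)
      have hCsub : ∀ x ∈ C.support, x ∈ p'.support := by
        intro x hx
        rw [SimpleGraph.Walk.support_eq_cons] at hx
        rw [hp's]
        rcases List.mem_cons.mp hx with rfl | hx'
        · exact List.mem_append.mpr (Or.inl (SimpleGraph.Walk.end_mem_support pt))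
        · exact List.mem_append.mpr (Or.inr (List.mem_append.mpr (Or.inl hx')))
      have hp'cnt : ∀ e, p'.edges.count e = p.edges.count e + C.edges.count e := by
        intro e
        have h1 : p.edges = pt.edges ++ pd.edges := by
          rw [← hspec, SimpleGraph.Walk.edges_append]
        have h2 : p'.edges = pt.edges ++ (C.edges ++ pd.edges) := by
          rw [hp', SimpleGraph.Walk.edges_append, SimpleGraph.Walk.edges_append]
        rw [h1, h2]
        simp [List.count_append]
        try omega
      obtain ⟨q, hq1, hq2, hq3⟩ := ih m₂ hsum₂ hloop₂ heven₂ a p'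
      refine ⟨q, hsub.trans hq1, ?_, ?_⟩
      · intro v s hs hr
        have hsp' : s ∈ p'.support := hsub.subset hs
        have hT : ∀ x y : V, m s(x,y) ≠ 0 → m₂ s(x,y) = 0 → x ∈ p'.support := by
          intro x y hxy h2
          have hcx : 1 ≤ C.edges.count s(x,y) := by
            have := hpoint s(x,y)
            omega
          have hmem : s(x,y) ∈ C.edges := List.count_pos_iff.mp hcx
          exact hCsub x (SimpleGraph.Walk.fst_mem_support_of_mem_edges C hmem)
        obtain ⟨s', hs', hr'⟩ := reach_transfer m m₂ p'.support hT hsp' hr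
        exact hq2 v s' hs' hr'
      · intro e
        have h1 := hq3 e
        have h2 := hp'cnt e
        have h3 := hpoint e
        omega

lemma end_mem_tail {G : SimpleGraph V} {x y : V} (p : G.Walk x y) (hxy : x ≠ y) :
    y ∈ p.support.tail := by
  have h := p.end_mem_support
  rw [p.support_eq_cons] at h
  rcases List.mem_cons.mp h with h' | h'
  · exact absurd h'.symm hxy
  · exact h'

lemma edges_mapLe {G G' : SimpleGraph V} (h : G ≤ G') {x y : V} (p : G.Walk x y) :
    (p.mapLe h).edges = p.edges := by
  simp only [SimpleGraph.Walk.mapLe, SimpleGraph.Walk.edges_map,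
    show ((SimpleGraph.Hom.ofLE h : V → V)) = id from rfl,
    Sym2.map_id, List.map_id]

lemma support_mapLe {G G' : SimpleGraph V} (h : G ≤ G') {x y : V} (p : G.Walk x y) :
    (p.mapLe h).support = p.support := by
  simp only [SimpleGraph.Walk.mapLe, SimpleGraph.Walk.support_map,
    show ((SimpleGraph.Hom.ofLE h : V → V)) = id from rfl, List.map_id]

lemma base_walk {k : ℕ} [NeZero k] (d : Fin k → V) (hd : Function.Injective d)
    (G' : SimpleGraph V) (W : ∀ i : Fin k, G'.Walk (d i) (d (i + 1))) :
    ∀ j : ℕ, j ≤ k → ∃ A : (⊤ : SimpleGraph V).Walk (d 0) (d (j : Fin k)),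
      (∀ e, A.edges.count e = ∑ i ∈ Finset.range j, (W (i : Fin k)).edges.count e) ∧
      (List.map (fun t : ℕ => d ((t : Fin k))) (List.range (min (j+1) k))) <+ A.support := by
  intro j
  induction j with
  | zero =>
    intro _
    refine ⟨(SimpleGraph.Walk.nil' (d 0)).copy rfl (by norm_num), ?_, ?_⟩
    · simp
    · have hk : 1 ≤ k := Nat.one_le_iff_ne_zero.mpr (NeZero.ne k)
      have : min (0+1) k = 1 := by omega
      rw [this]
      simp [SimpleGraph.Walk.support_copy, List.range_succ]
  | succ j ihj =>
    intro hj1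
    have hj : j < k := hj1
    obtain ⟨A, hAc, hAs⟩ := ihj (le_of_lt hj)
    have hcast : d ((j : Fin k) + 1) = d (((j+1 : ℕ) : Fin k)) := by
      congr 1
      push_cast
      ring
    set A' : (⊤ : SimpleGraph V).Walk (d 0) (d (((j+1:ℕ)) : Fin k)) :=
      A.append (((W (j : Fin k)).mapLe le_top).copy rfl hcast) with hA'
    refine ⟨A', ?_, ?_⟩
    · intro e
      rw [hA', SimpleGraph.Walk.edges_append, List.count_append, hAc e,
        Finset.sum_range_succ]
      congr 1
      rw [SimpleGraph.Walk.edges_copy, edges_mapLe]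
    · have hsupp : A'.support = A.support ++ ((W (j : Fin k)).mapLe le_top).support.tail := by
        rw [hA', SimpleGraph.Walk.support_append, SimpleGraph.Walk.support_copy]
      by_cases hjk : j + 1 < k
      · have hmin2 : min (j+1+1) k = (j+1)+1 := by omega
        have hmin1 : min (j+1) k = j+1 := by omega
        rw [hmin1] at hAs
        rw [hmin2, List.range_succ, List.map_append]
        rw [hsupp]
        refine List.Sublist.append hAs ?_
        simp only [List.map_cons, List.map_nil, List.singleton_sublist]
        have hne : d (j : Fin k) ≠ d ((j : Fin k) + 1) := by
          intro hc
          have h2 := hd hc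
          have h4 : ((j : Fin k) : ℕ) = (((j : Fin k) + 1 : Fin k) : ℕ) := by rw [← h2]
          have h3 : ((j : Fin k) + 1 : Fin k) = ((j + 1 : ℕ) : Fin k) := by push_cast; ring
          rw [Fin.val_cast_of_lt hj, h3, Fin.val_cast_of_lt hjk] at h4
          omega
        rw [← hcast]
        exact end_mem_tail ((W (j : Fin k)).mapLe le_top) hne
      · have hmin2 : min (j+1+1) k = j+1 := by omega
        have hmin1 : min (j+1) k = j+1 := by omega
        rw [hmin1] at hAs
        rw [hmin2, hsupp]
        exact hAs.trans (List.sublist_append_left _ _)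
  

lemma chain_bound (c : Sym2 V → ℝ) (hcdiag : ∀ v : V, c s(v, v) = 0)
    (htri : ∀ u x w : V, c s(u, w) ≤ c s(u, x) + c s(x, w)) (ℓ : ℕ → V) :
    ∀ a b : ℕ, a ≤ b → c s(ℓ a, ℓ b) ≤ ∑ i ∈ Finset.Ico a b, c s(ℓ i, ℓ (i+1)) := by
  intro a b hab
  induction b, hab using Nat.le_induction with
  | base => simp [hcdiag]
  | succ b hab ih =>
    rw [Finset.sum_Ico_succ_top (by omega)]
    calc c s(ℓ a, ℓ (b+1)) ≤ c s(ℓ a, ℓ b) + c s(ℓ b, ℓ (b+1)) := htri _ _ _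
    _ ≤ _ := by linarith

lemma walk_cost (c : Sym2 V → ℝ) (x₀ : V) : ∀ {a b : V} (p : (⊤ : SimpleGraph V).Walk a b),
    ∑ i ∈ Finset.range p.length, c s(p.support.getD i x₀, p.support.getD (i+1) x₀) =
      (p.edges.map c).sum := by
  intro a b p
  induction p with
  | nil => simp
  | @cons a b' c' h p ih =>
    simp only [SimpleGraph.Walk.support_cons, SimpleGraph.Walk.length_cons,
      SimpleGraph.Walk.edges_cons, List.map_cons, List.sum_cons]
    rw [Finset.sum_range_succ']
    simp only [List.getD_cons_succ]
    have h0 : p.support.getD 0 x₀ = b' := by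
      rw [p.support_eq_cons]
      rfl
    rw [ih, List.getD_cons_zero, h0]
    ring

lemma cost_le (c : Sym2 V → ℝ) (hc0 : ∀ e, 0 ≤ c e) (L : List (Sym2 V)) (m : Sym2 V → ℕ)
    (h : ∀ e, L.count e ≤ m e) :
    (L.map c).sum ≤ ∑ e : Sym2 V, (m e : ℝ) * c e := by
  rw [Finset.sum_list_map_count]
  have h1 : ∀ x ∈ L.toFinset, (L.count x) • c x ≤ (m x : ℝ) * c x := by
    intro x _
    rw [nsmul_eq_mul]
    exact mul_le_mul_of_nonneg_right (by exact_mod_cast h x) (hc0 x)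
  calc ∑ x ∈ L.toFinset, (L.count x) • c x ≤ ∑ x ∈ L.toFinset, (m x : ℝ) * c x :=
        Finset.sum_le_sum h1
  _ ≤ ∑ e : Sym2 V, (m e : ℝ) * c e := by
      apply Finset.sum_le_sum_of_subset_of_nonneg (Finset.subset_univ _)
      intro e _ _
      exact mul_nonneg (by positivity) (hc0 e)

end AuxShortcut

/-- Shortcutting an Eulerian multigraph that contains a suitably ordered closed walk:
Let `G` be the complete graph on `V` with metric cost `c`, let `M` be a connected Eulerian
multigraph on `V` given by edge multiplicities `m`, and suppose `M` contains a closed walk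
visiting the distinct vertices `d 1, …, d k` in this cyclic order (given as walks `W i` from
`d i` to `d (i+1)` jointly using each edge copy at most once). Then there is a Hamiltonian
cycle of `G` visiting `d 1, …, d k` in this order of cost at most `c(E_M)`. -/
theorem shortcut_eulerian_to_ordered_hamiltonian_cycle
    {V : Type*} [Fintype V] [DecidableEq V] [Nonempty V]
    (c : Sym2 V → ℝ)
    (hc0 : ∀ e, 0 ≤ c e) (hcdiag : ∀ v : V, c s(v, v) = 0)
    (htri : ∀ u x w : V, c s(u, w) ≤ c s(u, x) + c s(x, w))
    {k : ℕ} [NeZero k] (d : Fin k → V) (hd : Function.Injective d)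
    (m : Sym2 V → ℕ) (hdiag : ∀ v : V, m s(v, v) = 0)
    (heven : ∀ v : V, Even (∑ w : V, m s(v, w)))
    (hconn : (SimpleGraph.fromEdgeSet {e : Sym2 V | m e ≠ 0}).Connected)
    (W : ∀ i : Fin k, (SimpleGraph.fromEdgeSet {e : Sym2 V | m e ≠ 0}).Walk (d i) (d (i + 1)))
    (hW : ∀ e : Sym2 V, (∑ i : Fin k, ((W i).edges.count e)) ≤ m e) :
    ∃ f : ℕ → V,
      (∀ i : ℕ, f (i + Fintype.card V) = f i) ∧
      Function.Bijective (fun i : Fin (Fintype.card V) => f i) ∧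
      (∃ g : Fin k → ℕ, StrictMono g ∧ (∀ i, g i < Fintype.card V) ∧ ∀ i, f (g i) = d i) ∧
      ∑ i ∈ Finset.range (Fintype.card V), c s(f i, f (i + 1)) ≤
        ∑ e : Sym2 V, (m e : ℝ) * c e := by
  classical
  set n := Fintype.card V with hn
  have hn1 : 1 ≤ n := Fintype.card_pos
  have hRHS0 : (0:ℝ) ≤ ∑ e : Sym2 V, (m e : ℝ) * c e :=
    Finset.sum_nonneg fun e _ => mul_nonneg (by positivity) (hc0 e)
  by_cases hncase : n = 1
  · -- trivial one-vertex case
    have hsub : Subsingleton V := Fintype.card_le_one_iff_subsingleton.mp (by omega)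
    refine ⟨fun _ => d 0, fun i => rfl, ?_, ⟨fun _ => 0, ?_, ?_, ?_⟩, ?_⟩
    · constructor
      · intro i j _
        have : Subsingleton (Fin n) := by rw [hncase]; infer_instance
        exact Subsingleton.elim i j
      · intro v
        exact ⟨⟨0, by omega⟩, Subsingleton.elim _ _⟩
    · have hk1 : k ≤ 1 := by
        have h1 := Fintype.card_le_of_injective d hd
        rw [Fintype.card_fin] at h1
        omega
      intro i j hij
      exfalso
      have h1 : (i : ℕ) < j := hij
      have h2 := j.isLt
      omega
    · intro i
      show 0 < n
      omega
    · intro i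
      exact Subsingleton.elim _ _
    · rw [hncase]
      simp [hcdiag]
      exact hRHS0
  · have hn2 : 2 ≤ n := by omega
    -- base walk through the junctions
    obtain ⟨A₀, hAc, hAs⟩ := base_walk d hd _ W k le_rfl
    have hcastk : d ((k : ℕ) : Fin k) = d 0 := by rw [Fin.natCast_self]
    set A : (⊤ : SimpleGraph V).Walk (d 0) (d 0) := A₀.copy rfl hcastk with hA
    have hAe : A.edges = A₀.edges := SimpleGraph.Walk.edges_copy _ rfl hcastk
    have hAsup : A.support = A₀.support := SimpleGraph.Walk.support_copy _ rfl hcastk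
    have hAcnt : ∀ e, A.edges.count e ≤ m e := by
      intro e
      rw [hAe, hAc e]
      calc ∑ i ∈ Finset.range k, ((W ((i : ℕ) : Fin k)).edges.count e)
          = ∑ i : Fin k, (W i).edges.count e := by
            rw [← Fin.sum_univ_eq_sum_range (fun t : ℕ => (W ((t : Fin k))).edges.count e) k]
            exact Finset.sum_congr rfl (fun i _ => by rw [Fin.cast_val_eq_self])
        _ ≤ m e := hW e
    set m' : Sym2 V → ℕ := fun e => m e - A.edges.count e with hm'
    have hpoint : ∀ e, m e = m' e + A.edges.count e := by
      intro e; have := hAcnt e; simp only [hm']; omega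
    have hloop' : ∀ v, m' s(v,v) = 0 := by
      intro v; have := hdiag v; simp only [hm']; omega
    have heven' : ∀ v, (∑ w : V, m' s(v,w)) % 2 = 0 := by
      intro v
      have hdg : (∑ w : V, m s(v,w)) =
          (∑ w : V, m' s(v,w)) + ∑ w : V, A.edges.count s(v,w) := by
        rw [Finset.sum_congr rfl (fun w _ => hpoint s(v,w)), Finset.sum_add_distrib]
      have hpar := walk_deg_parity A v
      have h2 : ((if v = d 0 then 1 else 0) + (if v = d 0 then (1:ℕ) else 0)) % 2 = 0 := by
        split_ifs <;> rfl
      have h1 : (∑ w : V, m s(v,w)) % 2 = 0 := Nat.even_iff.mp (heven v)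
      omega
    obtain ⟨q, hq1, hq2, hq3⟩ := absorb (∑ e : Sym2 V, m' e) m' le_rfl hloop' heven' (d 0) A
    have hqcnt : ∀ e, q.edges.count e ≤ m e := by
      intro e; have h1 := hq3 e; have h2 := hpoint e; omega
    have hcover : ∀ v : V, v ∈ q.support := by
      intro v
      have hr : (SimpleGraph.fromEdgeSet {e : Sym2 V | m e ≠ 0}).Reachable v (d 0) :=
        hconn.preconnected v (d 0)
      have hT : ∀ x y : V, m s(x,y) ≠ 0 → m' s(x,y) = 0 → x ∈ A.support := by
        intro x y hxy h0
        have h1 : 1 ≤ A.edges.count s(x,y) := by have := hpoint s(x,y); omega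
        exact SimpleGraph.Walk.fst_mem_support_of_mem_edges A (List.count_pos_iff.mp h1)
      obtain ⟨s', hs', hr'⟩ := reach_transfer m m' A.support hT A.start_mem_support hr
      exact hq2 v s' hs' hr'
    -- positions
    have hlast0 : q.support.getD q.length (d 0) = d 0 := by
      have hql := q.length_support
      have h1 := List.getLast_eq_getElem q.support_ne_nil
      rw [q.getLast_support] at h1
      have h3 : q.support[q.support.length - 1]? = some (d 0) := by
        rw [List.getElem?_eq_getElem (by omega), ← h1]
      rw [show q.support.length - 1 = q.length from by omega] at h3
      rw [List.getD_eq_getElem?_getD, h3]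
      rfl
    set L := q.support with hL
    set N := q.length with hN
    have hLlen : L.length = N + 1 := q.length_support
    have hℓ0 : L.getD 0 (d 0) = d 0 := by rw [hL, q.support_eq_cons]; rfl
    have hlast : L.getD N (d 0) = d 0 := hlast0
    have hN1 : 1 ≤ N := by
      by_contra hc
      push_neg at hc
      obtain ⟨v, w, hvw⟩ := Fintype.exists_pair_of_one_lt_card (show 1 < Fintype.card V by omega)
      have hv := hcover v
      have hw := hcover w
      have hlen1 : L.length = 1 := by omega
      obtain ⟨z, hz⟩ := List.length_eq_one_iff.mp hlen1
      rw [hz] at hv hw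
      simp at hv hw
      exact hvw (hv.trans hw.symm)
    have hAs' : List.map (fun t : ℕ => d ((t : Fin k))) (List.range k) <+ L := by
      have hmin : min (k+1) k = k := by omega
      rw [hmin] at hAs
      refine hAs.trans ?_
      rw [← hAsup]
      exact hq1
    obtain ⟨emb, hemb⟩ := List.sublist_iff_exists_orderEmbedding_getElem?_eq.mp hAs'
    have hembval : ∀ i : Fin k, L[emb i.val]? = some (d i) := by
      intro i
      have h1 := hemb i.val
      have h2 : (List.map (fun t : ℕ => d ((t : Fin k))) (List.range k))[i.val]?
          = some (d i) := by
        rw [List.getElem?_map, List.getElem?_range i.isLt]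
        simp
      rw [← h1, h2]
    have hembl : ∀ i : Fin k, emb i.val < N + 1 := by
      intro i
      obtain ⟨h, _⟩ := List.getElem?_eq_some_iff.mp (hembval i)
      omega
    have hembget : ∀ i : Fin k, L.getD (emb i.val) (d 0) = d i := by
      intro i
      have h := hembval i
      rw [List.getD_eq_getElem?_getD, h]
      rfl
    set pos : V → ℕ := fun v =>
      if h : ∃ i : Fin k, d i = v then
        (if Classical.choose h = (0 : Fin k) then 0 else emb (Classical.choose h).val)
      else L.idxOf v with hpos
    have hposd : ∀ i : Fin k, pos (d i) = if i = 0 then 0 else emb i.val := by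
      intro i
      have hex : ∃ j : Fin k, d j = d i := ⟨i, rfl⟩
      have hch : Classical.choose hex = i := hd (Classical.choose_spec hex)
      simp only [hpos]
      rw [dif_pos hex, hch]
    have hposget : ∀ v, L.getD (pos v) (d 0) = v := by
      intro v
      by_cases h : ∃ i : Fin k, d i = v
      · have hch := Classical.choose_spec h
        simp only [hpos]
        rw [dif_pos h]
        by_cases h0 : Classical.choose h = 0
        · rw [if_pos h0, hℓ0, ← hch, h0]
        · rw [if_neg h0, hembget (Classical.choose h), hch]
      · simp only [hpos]
        rw [dif_neg h]
        have hmem : v ∈ L := hcover v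
        have h1 : L.idxOf v < L.length := List.idxOf_lt_length_iff.mpr hmem
        rw [List.getD_eq_getElem?_getD, List.getElem?_eq_getElem h1, List.getElem_idxOf h1]
        rfl
    have hposlt : ∀ v, pos v < N := by
      intro v
      have hle : pos v < N + 1 := by
        by_cases h : ∃ i : Fin k, d i = v
        · simp only [hpos]
          rw [dif_pos h]
          by_cases h0 : Classical.choose h = 0
          · rw [if_pos h0]; omega
          · rw [if_neg h0]
            exact hembl (Classical.choose h)
        · simp only [hpos]
          rw [dif_neg h]
          have := List.idxOf_lt_length_iff.mpr (hcover v)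
          omega
      by_contra hc
      push_neg at hc
      have hpN : pos v = N := by omega
      have hvd0 : v = d 0 := by rw [← hposget v, hpN, hlast]
      subst hvd0
      have h1 : pos (d 0) = 0 := by rw [hposd 0, if_pos rfl]
      omega
    have hposinj : Function.Injective pos := by
      intro v w h
      rw [← hposget v, ← hposget w, h]
    set S : Finset ℕ := Finset.univ.image pos with hS
    have hScard : S.card = n := by
      rw [hS, Finset.card_image_of_injective _ hposinj, Finset.card_univ, hn]
    set σ := S.orderIsoOfFin hScard with hσ
    set t : ℕ → ℕ := fun j => (σ ⟨j % n, Nat.mod_lt _ (by omega)⟩ : ℕ) with ht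
    set f : ℕ → V := fun j => L.getD (t j) (d 0) with hf
    have hteq : ∀ (a : ℕ) (h : a < n), t a = (σ ⟨a, h⟩ : ℕ) := by
      intro a h
      simp only [ht]
      exact congrArg (fun z : Fin n => ((σ z : ℕ))) (Fin.ext (Nat.mod_eq_of_lt h))
    have htper : ∀ j, t (j + n) = t j := by
      intro j
      simp only [ht]
      exact congrArg (fun z : Fin n => ((σ z : ℕ))) (Fin.ext (Nat.add_mod_right j n))
    have hfper : ∀ i : ℕ, f (i + n) = f i := by
      intro i
      simp only [hf]
      rw [htper]
    have hSmem : ∀ j : Fin n, (σ j : ℕ) ∈ S := fun j => (σ j).2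
    have hSlt : ∀ x ∈ S, x < N := by
      intro x hx
      obtain ⟨v, _, rfl⟩ := Finset.mem_image.mp hx
      exact hposlt v
    have hposσ : ∀ j : Fin n, pos (L.getD (σ j : ℕ) (d 0)) = (σ j : ℕ) := by
      intro j
      obtain ⟨v, _, hv⟩ := Finset.mem_image.mp (hSmem j)
      rw [← hv, hposget v]
    -- bijectivity
    have hfinj : Function.Injective (fun i : Fin n => f (i : ℕ)) := by
      intro i j hij
      simp only [hf] at hij
      rw [hteq i i.isLt, hteq j j.isLt] at hij
      have h1 : (σ ⟨(i : ℕ), i.isLt⟩ : ℕ) = (σ ⟨(j : ℕ), j.isLt⟩ : ℕ) := by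
        have hi := hposσ ⟨(i : ℕ), i.isLt⟩
        have hj := hposσ ⟨(j : ℕ), j.isLt⟩
        rw [← hi, ← hj, hij]
      have h2 : σ ⟨(i : ℕ), i.isLt⟩ = σ ⟨(j : ℕ), j.isLt⟩ := Subtype.ext h1
      have h3 := σ.injective h2
      have h4 : (i : ℕ) = (j : ℕ) := congrArg Fin.val h3
      exact Fin.ext h4
    have hfbij : Function.Bijective (fun i : Fin n => f (i : ℕ)) := by
      rw [Fintype.bijective_iff_injective_and_card]
      exact ⟨hfinj, by rw [Fintype.card_fin, hn]⟩
    -- the junction index function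
    have hposdS : ∀ i : Fin k, pos (d i) ∈ S :=
      fun i => Finset.mem_image_of_mem pos (Finset.mem_univ (d i))
    set g : Fin k → ℕ := fun i => ((σ.symm ⟨pos (d i), hposdS i⟩ : Fin n) : ℕ) with hg
    have hposdmono : ∀ i j : Fin k, i < j → pos (d i) < pos (d j) := by
      intro i j hij
      have hij' : (i : ℕ) < (j : ℕ) := hij
      have hjne : ¬(j = 0) := by
        intro hc
        rw [hc] at hij'
        simp at hij'
      rw [hposd i, hposd j, if_neg hjne]
      by_cases hi0 : i = 0
      · rw [if_pos hi0]
        have h0 : (i : ℕ) = 0 := by rw [hi0]; rfl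
        have h1 : emb 0 < emb (j : ℕ) := emb.strictMono (by omega)
        omega
      · rw [if_neg hi0]
        exact emb.strictMono hij'
    have hgmono : StrictMono g := by
      intro i j hij
      simp only [hg]
      have h1 : (⟨pos (d i), hposdS i⟩ : {x // x ∈ S}) < ⟨pos (d j), hposdS j⟩ :=
        Subtype.mk_lt_mk.mpr (hposdmono i j hij)
      exact σ.symm.strictMono h1
    have hglt : ∀ i, g i < n := fun i => (σ.symm ⟨pos (d i), hposdS i⟩).isLt
    have hfg : ∀ i, f (g i) = d i := by
      intro i
      simp only [hf]
      have h1 : t (g i) = pos (d i) := by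
        rw [hteq (g i) (hglt i)]
        have h2 : (⟨g i, hglt i⟩ : Fin n) = σ.symm ⟨pos (d i), hposdS i⟩ := by
          apply Fin.ext
          simp [hg]
        rw [h2]
        simp
      rw [h1, hposget]
    -- cost bound
    set g0 : ℕ → ℝ := fun i => c s(L.getD i (d 0), L.getD (i+1) (d 0)) with hg0
    have hchain : ∀ a b : ℕ, a ≤ b →
        c s(L.getD a (d 0), L.getD b (d 0)) ≤ ∑ i ∈ Finset.Ico a b, g0 i :=
      chain_bound c hcdiag htri _
    have htlt : ∀ a : ℕ, a < n → t a < N := by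
      intro a h
      rw [hteq a h]
      exact hSlt _ (hSmem ⟨a, h⟩)
    have htmono : ∀ a b : ℕ, a < b → b < n → t a < t b := by
      intro a b hab hb
      rw [hteq a (by omega), hteq b hb]
      have : (⟨a, by omega⟩ : Fin n) < ⟨b, hb⟩ := hab
      exact σ.strictMono this
    have htle : ∀ a b : ℕ, a ≤ b → b < n → t a ≤ t b := by
      intro a b hab hb
      rcases eq_or_lt_of_le hab with rfl | h
      · exact le_rfl
      · exact le_of_lt (htmono a b h hb)
    have hpartial : ∀ jj : ℕ, jj ≤ n - 1 →
        ∑ j ∈ Finset.range jj, (∑ i ∈ Finset.Ico (t j) (t (j+1)), g0 i)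
          = ∑ i ∈ Finset.Ico (t 0) (t jj), g0 i := by
      intro jj
      induction jj with
      | zero => simp
      | succ jj ih =>
        intro hjj
        rw [Finset.sum_range_succ, ih (by omega)]
        exact Finset.sum_Ico_consecutive _ (htle 0 jj (by omega) (by omega))
          (htle jj (jj+1) (by omega) (by omega))
    have hterm : ∀ j, j < n - 1 → c s(f j, f (j+1)) ≤ ∑ i ∈ Finset.Ico (t j) (t (j+1)), g0 i := by
      intro j hj
      simp only [hf]
      exact hchain _ _ (le_of_lt (htmono j (j+1) (by omega) (by omega)))
    have hlastterm : c s(f (n-1), f n) ≤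
        (∑ i ∈ Finset.Ico (t (n-1)) N, g0 i) + ∑ i ∈ Finset.Ico 0 (t 0), g0 i := by
      have hfn : f n = L.getD (t 0) (d 0) := by
        simp only [hf]
        rw [show n = 0 + n from by omega, htper 0]
      rw [hfn]
      simp only [hf]
      have h1 : c s(L.getD (t (n-1)) (d 0), L.getD (t 0) (d 0)) ≤
          c s(L.getD (t (n-1)) (d 0), L.getD N (d 0)) +
          c s(L.getD N (d 0), L.getD (t 0) (d 0)) := htri _ _ _
      have h2 : c s(L.getD (t (n-1)) (d 0), L.getD N (d 0)) ≤
          ∑ i ∈ Finset.Ico (t (n-1)) N, g0 i :=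
        hchain _ _ (le_of_lt (htlt (n-1) (by omega)))
      have h3 : c s(L.getD N (d 0), L.getD (t 0) (d 0)) ≤
          ∑ i ∈ Finset.Ico 0 (t 0), g0 i := by
        have h3' := hchain 0 (t 0) (Nat.zero_le _)
        rw [hℓ0] at h3'
        rw [hlast]
        exact h3'
      linarith
    refine ⟨f, hfper, hfbij, ⟨g, hgmono, hglt, hfg⟩, ?_⟩
    calc ∑ i ∈ Finset.range n, c s(f i, f (i + 1))
        = (∑ j ∈ Finset.range (n-1), c s(f j, f (j+1))) + c s(f (n-1), f n) := by
          have hnn : n = (n-1) + 1 := by omega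
          rw [hnn, Finset.sum_range_succ, ← hnn]
      _ ≤ (∑ j ∈ Finset.range (n-1), ∑ i ∈ Finset.Ico (t j) (t (j+1)), g0 i)
            + ((∑ i ∈ Finset.Ico (t (n-1)) N, g0 i) + ∑ i ∈ Finset.Ico 0 (t 0), g0 i) := by
          exact add_le_add
            (Finset.sum_le_sum (fun j hj => hterm j (Finset.mem_range.mp hj))) hlastterm
      _ = ((∑ i ∈ Finset.Ico 0 (t 0), g0 i) + ∑ i ∈ Finset.Ico (t 0) (t (n-1)), g0 i)
            + ∑ i ∈ Finset.Ico (t (n-1)) N, g0 i := by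
          rw [hpartial (n-1) le_rfl]
          ring
      _ = ∑ i ∈ Finset.Ico 0 N, g0 i := by
          rw [Finset.sum_Ico_consecutive _ (Nat.zero_le _) (htle 0 (n-1) (by omega) (by omega)),
            Finset.sum_Ico_consecutive _ (Nat.zero_le _) (le_of_lt (htlt (n-1) (by omega)))]
      _ = ∑ i ∈ Finset.range N, g0 i := by rw [Finset.range_eq_Ico]
      _ = (q.edges.map c).sum := walk_cost c (d 0) q
      _ ≤ ∑ e : Sym2 V, (m e : ℝ) * c e := cost_le c hc0 q.edges m hqcnt
end
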